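/- Let C ⊆ Y be compact and let B ⊆ Y/J be compact with p(C) ⊆ B. Then there is a compact set A ⊆ Y such that C ⊆ A and p(A) = B. -/

import Mathlib

open Pointwise

/-- Let `Y` be a locally compact Hausdorff space, and let the group `J` act on `Y` by
homeomorphisms, freely and properly discontinuously.  Let `p : Y → Y/J` be the quotient
map onto the orbit space.  If `C ⊆ Y` is compact and `B ⊆ Y/J` is compact with
`p(C) ⊆ B`, then there is a compact set `A ⊆ Y` with `C ⊆ A` and `p(A) = B`. -/
theorem stmt3 {Y : Type*} [TopologicalSpace Y] [LocallyCompactSpace Y] [T2Space Y]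
    {J : Type*} [Group J] [MulAction J Y]
    (hcont : ∀ j : J, Continuous fun y : Y => j • y)
    (hfree : ∀ (j : J) (y : Y), j • y = y → j = 1)
    (hpd : ∀ K : Set Y, IsCompact K → {j : J | ((j • K) ∩ K).Nonempty}.Finite)
    (C : Set Y) (hC : IsCompact C)
    (B : Set (Quotient (MulAction.orbitRel J Y))) (hB : IsCompact B)
    (hCB : Quotient.mk (MulAction.orbitRel J Y) '' C ⊆ B) :
    ∃ A : Set Y, IsCompact A ∧ C ⊆ A ∧
      Quotient.mk (MulAction.orbitRel J Y) '' A = B := by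

  haveI : ContinuousConstSMul J Y := ⟨hcont⟩
  haveI : ProperlyDiscontinuousSMul J Y := by
    constructor
    intro K L hK hL
    apply (hpd (K ∪ L) (hK.union hL)).subset
    intro j hj
    obtain ⟨y, ⟨x, hxK, rfl⟩, hyL⟩ := hj
    exact ⟨j • x, ⟨x, Set.mem_union_left _ hxK, rfl⟩, Set.mem_union_right _ hyL⟩
  set p : Y → Quotient (MulAction.orbitRel J Y) := Quotient.mk (MulAction.orbitRel J Y) with hp
  have hpopen : IsOpenMap p := isOpenMap_quotient_mk'_mul
  have hpcont : Continuous p := continuous_quot_mk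
  have hBclosed : IsClosed (p ⁻¹' B) := (hB.isClosed).preimage hpcont
  -- cover B by open images of interiors of compact neighborhoods
  have hcov : ∀ b ∈ B, ∃ K : Set Y, IsCompact K ∧ b ∈ p '' interior K := by
    intro b hb
    obtain ⟨y, rfl⟩ := Quotient.exists_rep b
    obtain ⟨K, hK, hyK⟩ := exists_compact_mem_nhds y
    exact ⟨K, hK, ⟨y, mem_interior_iff_mem_nhds.mpr hyK, rfl⟩⟩
  choose! K hKc hKb using hcov
  obtain ⟨s, hs⟩ := hB.elim_finite_subcover (fun b : B => p '' interior (K b))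
    (fun b => hpopen _ isOpen_interior)
    (fun b hb => Set.mem_iUnion.mpr ⟨⟨b, hb⟩, hKb b hb⟩)
  refine ⟨C ∪ ⋃ b ∈ s, (K b ∩ p ⁻¹' B), ?_, Set.subset_union_left, ?_⟩
  · exact hC.union (s.isCompact_biUnion fun b _ => (hKc b b.2).inter_right hBclosed)
  · apply Set.Subset.antisymm
    · rw [Set.image_union, Set.image_iUnion₂]
      refine Set.union_subset hCB ?_
      exact Set.iUnion₂_subset fun b _ => (Set.image_mono (f := p) Set.inter_subset_right).trans
        (Set.image_preimage_subset p B)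
    · intro b hb
      obtain ⟨i, hi, ⟨y, hy, rfl⟩⟩ := Set.mem_iUnion₂.mp (hs hb)
      exact ⟨y, Set.mem_union_right _ (Set.mem_biUnion hi ⟨interior_subset hy, hb⟩), rfl⟩
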